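/- Let R be a commutative ring. For every ring term t over R there exists a standard ring term u over R such that t and u are f-equivalent. -/

import Mathlib

/-- Ring terms over a commutative ring `R`. -/
inductive RingTerm (R : Type*) where
  | X : ℕ → RingTerm R
  | C : R → RingTerm R
  | zero : RingTerm R
  | one : RingTerm R
  | add : RingTerm R → RingTerm R → RingTerm R
  | mul : RingTerm R → RingTerm R → RingTerm R

namespace RingTerm

variable {R : Type*} [CommRing R]

/-- The evaluation map `Ψ` into multivariate polynomials. -/
noncomputable def psi : RingTerm R → MvPolynomial ℕ R
  | X i => MvPolynomial.X i
  | C r => MvPolynomial.C r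
  | zero => 0
  | one => 1
  | add t u => psi t + psi u
  | mul t u => psi t * psi u

/-- One-step elementary transformation: the twelve rules ET−1 … ET10,
closed under the term-forming operations (compatible closure). -/
inductive Step : RingTerm R → RingTerm R → Prop where
  | etm1 : Step zero (C 0)
  | et0 : Step one (C 1)
  | et1 (r s : R) : Step (add (C r) (C s)) (C (r + s))
  | et2 (r s : R) : Step (mul (C r) (C s)) (C (r * s))
  | et3 (u : RingTerm R) : Step (add zero u) u
  | et4 (u : RingTerm R) : Step (mul one u) u
  | et5 (u u' : RingTerm R) : Step (add u u') (add u' u)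
  | et6 (u u' : RingTerm R) : Step (mul u u') (mul u' u)
  | et7 (u u' u'' : RingTerm R) : Step (add u (add u' u'')) (add (add u u') u'')
  | et8 (u u' u'' : RingTerm R) : Step (mul u (mul u' u'')) (mul (mul u u') u'')
  | et9 (u u' u'' : RingTerm R) :
      Step (mul u (add u' u'')) (add (mul u u') (mul u u''))
  | et10 (u : RingTerm R) : Step (mul zero u) zero
  | addLeft {t t' : RingTerm R} (u : RingTerm R) :
      Step t t' → Step (add t u) (add t' u)
  | addRight (u : RingTerm R) {t t' : RingTerm R} :
      Step t t' → Step (add u t) (add u t')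
  | mulLeft {t t' : RingTerm R} (u : RingTerm R) :
      Step t t' → Step (mul t u) (mul t' u)
  | mulRight (u : RingTerm R) {t t' : RingTerm R} :
      Step t t' → Step (mul u t) (mul u t')

/-- f-equivalence: the equivalence closure of the one-step transformation. -/
def FEq (t u : RingTerm R) : Prop := Relation.EqvGen Step t u

end RingTerm

namespace RingTerm

variable {R : Type*}

/-- The number of occurrences of the variable `X i` in a term. -/
def varCount : RingTerm R → ℕ → ℕ
  | X j, i => if j = i then 1 else 0
  | C _, _ => 0
  | zero, _ => 0
  | one, _ => 0
  | add t u, i => varCount t i + varCount u i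
  | mul t u, i => varCount t i + varCount u i

/-- A term built only from variables and the binary symbol `·`. -/
def MulOnly : RingTerm R → Prop
  | X _ => True
  | mul t u => MulOnly t ∧ MulOnly u
  | _ => False

/-- An `m̄`-monomial: a term built only from variables and `·` in which each
variable `X i` occurs exactly `m̄ i` times; for `m̄ = 0` it is the term `1`. -/
def IsMonomial (m : ℕ →₀ ℕ) (t : RingTerm R) : Prop :=
  (m = 0 ∧ t = one) ∨ (MulOnly t ∧ ∀ i, varCount t i = m i)

/-- Nonempty iterated sums: `IsSumOfPos l s` holds iff `s` is obtained from a
term built only from variables (each occurring exactly once) and `+` by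
substituting the terms of the multiset `l` for the variables. -/
inductive IsSumOfPos : Multiset (RingTerm R) → RingTerm R → Prop where
  | single (t : RingTerm R) : IsSumOfPos {t} t
  | add {l l' : Multiset (RingTerm R)} {s s' : RingTerm R} :
      IsSumOfPos l s → IsSumOfPos l' s' → IsSumOfPos (l + l') (add s s')

/-- `s` is a sum of the terms in the multiset `l`; for `l = 0` the unique sum
is the term `0`. -/
def IsSumOf (l : Multiset (RingTerm R)) (s : RingTerm R) : Prop :=
  (l = 0 ∧ s = zero) ∨ IsSumOfPos l s

end RingTerm

namespace RingTerm

/-- `t` is a standard ring term with carrier `p`: `t` is a sum of terms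
`C (r i) · μ i`, `i = 1, …, N`, where the `r i` are nonzero and the `μ i` are
`m̄ i`-monomials with pairwise distinct exponent vectors, and
`p = Σ_i monomial (m̄ i) (r i)`. -/
noncomputable def IsStandardWithCarrier {R : Type*} [CommRing R]
    (t : RingTerm R) (p : MvPolynomial ℕ R) : Prop :=
  ∃ (N : ℕ) (r : Fin N → R) (m : Fin N → (ℕ →₀ ℕ)) (μ : Fin N → RingTerm R),
    (∀ i, r i ≠ 0) ∧ Function.Injective m ∧
    (∀ i, IsMonomial (m i) (μ i)) ∧
    IsSumOf (Multiset.map (fun i => mul (C (r i)) (μ i)) Finset.univ.val) t ∧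
    p = ∑ i : Fin N, MvPolynomial.monomial (m i) (r i)

end RingTerm

namespace RingTerm

open MvPolynomial
set_option linter.unusedSectionVars false

variable {R : Type*} [CommRing R]

local infix:50 " ∼ " => RingTerm.FEq

/-! ### Basic FEq machinery -/

theorem feq_rfl {t : RingTerm R} : t ∼ t := Relation.EqvGen.refl t

theorem FEq.symm' {t u : RingTerm R} (h : t ∼ u) : u ∼ t := Relation.EqvGen.symm _ _ h

theorem FEq.trans' {t u v : RingTerm R} (h : t ∼ u) (h' : u ∼ v) : t ∼ v :=
  Relation.EqvGen.trans _ _ _ h h'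

instance : Trans (FEq (R := R)) (FEq (R := R)) (FEq (R := R)) := ⟨FEq.trans'⟩

theorem Step.feq {t u : RingTerm R} (h : Step t u) : t ∼ u := Relation.EqvGen.rel _ _ h

theorem FEq.addLeft' {t t' : RingTerm R} (u : RingTerm R) (h : t ∼ t') :
    add t u ∼ add t' u := by
  induction h with
  | rel a b hab => exact (Step.addLeft u hab).feq
  | refl a => exact feq_rfl
  | symm a b _ ih => exact ih.symm'
  | trans a b c _ _ ih1 ih2 => exact ih1.trans' ih2

theorem FEq.addRight' (u : RingTerm R) {t t' : RingTerm R} (h : t ∼ t') :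
    add u t ∼ add u t' := by
  induction h with
  | rel a b hab => exact (Step.addRight u hab).feq
  | refl a => exact feq_rfl
  | symm a b _ ih => exact ih.symm'
  | trans a b c _ _ ih1 ih2 => exact ih1.trans' ih2

theorem FEq.mulLeft' {t t' : RingTerm R} (u : RingTerm R) (h : t ∼ t') :
    mul t u ∼ mul t' u := by
  induction h with
  | rel a b hab => exact (Step.mulLeft u hab).feq
  | refl a => exact feq_rfl
  | symm a b _ ih => exact ih.symm'
  | trans a b c _ _ ih1 ih2 => exact ih1.trans' ih2

theorem FEq.mulRight' (u : RingTerm R) {t t' : RingTerm R} (h : t ∼ t') :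
    mul u t ∼ mul u t' := by
  induction h with
  | rel a b hab => exact (Step.mulRight u hab).feq
  | refl a => exact feq_rfl
  | symm a b _ ih => exact ih.symm'
  | trans a b c _ _ ih1 ih2 => exact ih1.trans' ih2

theorem FEq.addCongr {a a' b b' : RingTerm R} (h : a ∼ a') (h' : b ∼ b') :
    add a b ∼ add a' b' := (h.addLeft' b).trans' (FEq.addRight' a' h')

theorem FEq.mulCongr {a a' b b' : RingTerm R} (h : a ∼ a') (h' : b ∼ b') :
    mul a b ∼ mul a' b' := (h.mulLeft' b).trans' (FEq.mulRight' a' h')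

theorem feq_add_zero (a : RingTerm R) : add a zero ∼ a :=
  (Step.et5 a zero).feq.trans' (Step.et3 a).feq

theorem feq_mul_one (a : RingTerm R) : mul a one ∼ a :=
  (Step.et6 a one).feq.trans' (Step.et4 a).feq

theorem feq_mul_C_zero (u : RingTerm R) : mul (C 0) u ∼ zero :=
  ((Step.etm1.feq.symm').mulLeft' u).trans' (Step.et10 u).feq

/-! ### Iterated products -/

/-- Product of a list of variable indices (1 for the empty list). -/
def prodT : List ℕ → RingTerm R
  | [] => one
  | [i] => X i
  | i :: l@(_ :: _) => mul (X i) (prodT l)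

theorem prodT_nil : (prodT [] : RingTerm R) = one := by simp [prodT]

theorem prodT_singleton (i : ℕ) : (prodT [i] : RingTerm R) = X i := by simp [prodT]

theorem prodT_cons₂ (i j : ℕ) (l : List ℕ) :
    (prodT (i :: j :: l) : RingTerm R) = mul (X i) (prodT (j :: l)) := by simp [prodT]

theorem prodT_cons (i : ℕ) (l : List ℕ) :
    (prodT (i :: l) : RingTerm R) ∼ mul (X i) (prodT l) := by
  cases l with
  | nil => rw [prodT_singleton, prodT_nil]; exact (feq_mul_one (X i)).symm'
  | cons j l => rw [prodT_cons₂]; exact feq_rfl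

theorem prodT_append (l l' : List ℕ) :
    (mul (prodT l) (prodT l') : RingTerm R) ∼ prodT (l ++ l') := by
  induction l with
  | nil => rw [prodT_nil]; exact (Step.et4 _).feq
  | cons i l ih =>
    calc (mul (prodT (i :: l)) (prodT l') : RingTerm R)
        ∼ mul (mul (X i) (prodT l)) (prodT l') := (prodT_cons i l).mulLeft' _
      _ ∼ mul (X i) (mul (prodT l) (prodT l')) := (Step.et8 _ _ _).feq.symm'
      _ ∼ mul (X i) (prodT (l ++ l')) := ih.mulRight' _
      _ ∼ prodT (i :: (l ++ l')) := (prodT_cons i (l ++ l')).symm'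

theorem prodT_perm {l l' : List ℕ} (h : l.Perm l') :
    (prodT l : RingTerm R) ∼ prodT l' := by
  induction h with
  | nil => exact feq_rfl
  | cons x _ ih =>
    exact (prodT_cons x _).trans' ((ih.mulRight' _).trans' (prodT_cons x _).symm')
  | swap x y l =>
    calc (prodT (y :: x :: l) : RingTerm R)
        ∼ mul (X y) (prodT (x :: l)) := prodT_cons _ _
      _ ∼ mul (X y) (mul (X x) (prodT l)) := (prodT_cons x l).mulRight' _
      _ ∼ mul (mul (X y) (X x)) (prodT l) := (Step.et8 _ _ _).feq
      _ ∼ mul (mul (X x) (X y)) (prodT l) := ((Step.et6 _ _).feq).mulLeft' _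
      _ ∼ mul (X x) (mul (X y) (prodT l)) := (Step.et8 _ _ _).feq.symm'
      _ ∼ mul (X x) (prodT (y :: l)) := ((prodT_cons y l).symm').mulRight' _
      _ ∼ prodT (x :: y :: l) := (prodT_cons x _).symm'
  | trans _ _ ih1 ih2 => exact ih1.trans' ih2

theorem mulOnly_prodT {l : List ℕ} (h : l ≠ []) : MulOnly (prodT l : RingTerm R) := by
  induction l with
  | nil => exact absurd rfl h
  | cons i l ih =>
    cases l with
    | nil => rw [prodT_singleton]; trivial
    | cons j l =>
      rw [prodT_cons₂]
      exact ⟨trivial, ih (by simp)⟩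

theorem varCount_prodT (l : List ℕ) (hl : l ≠ []) (i : ℕ) :
    varCount (prodT l : RingTerm R) i = l.count i := by
  induction l with
  | nil => exact absurd rfl hl
  | cons j l ih =>
    cases l with
    | nil =>
      rw [prodT_singleton]
      simp only [varCount, List.count_cons, List.count_nil, beq_iff_eq]
      by_cases h : j = i <;> simp [h]
    | cons k l =>
      rw [prodT_cons₂]
      simp only [varCount]
      rw [ih (by simp)]
      conv_rhs => rw [List.count_cons]
      simp only [beq_iff_eq]
      by_cases h : j = i <;> simp [h, Nat.add_comm]

/-- Canonical monomial term for an exponent vector. -/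
noncomputable def monT (m : ℕ →₀ ℕ) : RingTerm R := prodT (Finsupp.toMultiset m).toList

theorem toMultiset_toList_eq_nil {m : ℕ →₀ ℕ} (hm : m = 0) :
    (Finsupp.toMultiset m).toList = [] := by
  rw [Multiset.toList_eq_nil, hm, Finsupp.toMultiset_zero]

theorem monT_zero : (monT 0 : RingTerm R) = one := by
  rw [monT, toMultiset_toList_eq_nil rfl, prodT_nil]

theorem isMonomial_monT (m : ℕ →₀ ℕ) : IsMonomial m (monT m : RingTerm R) := by
  by_cases hm : m = 0
  · exact Or.inl ⟨hm, by rw [hm, monT_zero]⟩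
  · right
    have hne : (Finsupp.toMultiset m).toList ≠ [] := by
      rw [Ne, Multiset.toList_eq_nil]
      intro h
      apply hm
      ext i
      have := Finsupp.count_toMultiset m i
      rw [h] at this
      simpa using this.symm
    refine ⟨mulOnly_prodT hne, fun i => ?_⟩
    rw [monT, varCount_prodT _ hne, ← Multiset.coe_count, Multiset.coe_toList,
      Finsupp.count_toMultiset]

theorem feq_mul_monT (m m' : ℕ →₀ ℕ) :
    (mul (monT m) (monT m') : RingTerm R) ∼ monT (m + m') := by
  refine (prodT_append _ _).trans' (prodT_perm ?_)
  rw [← Multiset.coe_eq_coe]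
  rw [← Multiset.coe_add, Multiset.coe_toList, Multiset.coe_toList, Multiset.coe_toList,
    Finsupp.toMultiset_add]

/-! ### Iterated sums -/

/-- Sum of a list of terms (0 for the empty list). -/
def sumT : List (RingTerm R) → RingTerm R
  | [] => zero
  | [t] => t
  | t :: l@(_ :: _) => add t (sumT l)

theorem sumT_nil : (sumT [] : RingTerm R) = zero := by simp [sumT]

theorem sumT_singleton (t : RingTerm R) : sumT [t] = t := by simp [sumT]

theorem sumT_cons₂ (t u : RingTerm R) (l : List (RingTerm R)) :
    sumT (t :: u :: l) = add t (sumT (u :: l)) := by simp [sumT]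

theorem sumT_cons (a : RingTerm R) (l : List (RingTerm R)) :
    sumT (a :: l) ∼ add a (sumT l) := by
  cases l with
  | nil => rw [sumT_singleton, sumT_nil]; exact (feq_add_zero a).symm'
  | cons b l => rw [sumT_cons₂]; exact feq_rfl

theorem sumT_append (l l' : List (RingTerm R)) :
    add (sumT l) (sumT l') ∼ sumT (l ++ l') := by
  induction l with
  | nil => rw [sumT_nil]; exact (Step.et3 _).feq
  | cons a l ih =>
    calc add (sumT (a :: l)) (sumT l')
        ∼ add (add a (sumT l)) (sumT l') := (sumT_cons a l).addLeft' _
      _ ∼ add a (add (sumT l) (sumT l')) := (Step.et7 _ _ _).feq.symm'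
      _ ∼ add a (sumT (l ++ l')) := ih.addRight' _
      _ ∼ sumT (a :: (l ++ l')) := (sumT_cons a _).symm'

theorem sumT_perm {l l' : List (RingTerm R)} (h : l.Perm l') : sumT l ∼ sumT l' := by
  induction h with
  | nil => exact feq_rfl
  | cons x _ ih =>
    exact (sumT_cons x _).trans' ((ih.addRight' _).trans' (sumT_cons x _).symm')
  | swap x y l =>
    calc sumT (y :: x :: l)
        ∼ add y (sumT (x :: l)) := sumT_cons _ _
      _ ∼ add y (add x (sumT l)) := (sumT_cons x l).addRight' _
      _ ∼ add (add y x) (sumT l) := (Step.et7 _ _ _).feq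
      _ ∼ add (add x y) (sumT l) := ((Step.et5 _ _).feq).addLeft' _
      _ ∼ add x (add y (sumT l)) := (Step.et7 _ _ _).feq.symm'
      _ ∼ add x (sumT (y :: l)) := ((sumT_cons y l).symm').addRight' _
      _ ∼ sumT (x :: y :: l) := (sumT_cons x _).symm'
  | trans _ _ ih1 ih2 => exact ih1.trans' ih2

theorem sumT_congr {α : Type*} {f g : α → RingTerm R} (L : List α)
    (h : ∀ x ∈ L, f x ∼ g x) : sumT (L.map f) ∼ sumT (L.map g) := by
  induction L with
  | nil => exact feq_rfl
  | cons a L ih =>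
    simp only [List.map_cons]
    refine (sumT_cons _ _).trans' (FEq.trans' ?_ (sumT_cons _ _).symm')
    exact (h a (by simp)).addCongr (ih fun x hx => h x (by simp [hx]))

theorem isSumOfPos_sumT {l : List (RingTerm R)} (h : l ≠ []) : IsSumOfPos (↑l) (sumT l) := by
  induction l with
  | nil => exact absurd rfl h
  | cons a l ih =>
    cases l with
    | nil =>
      rw [sumT_singleton]
      exact IsSumOfPos.single a
    | cons b l =>
      rw [sumT_cons₂]
      have : ((a :: b :: l : List (RingTerm R)) : Multiset (RingTerm R)) =
          ({a} : Multiset (RingTerm R)) + ↑(b :: l) := by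
        simp
      rw [this]
      exact IsSumOfPos.add (IsSumOfPos.single a) (ih (by simp))

theorem sumT_combine_head {a b c : RingTerm R} (l : List (RingTerm R))
    (h : add a b ∼ c) : sumT (a :: b :: l) ∼ sumT (c :: l) := by
  calc sumT (a :: b :: l) ∼ add a (sumT (b :: l)) := sumT_cons _ _
    _ ∼ add a (add b (sumT l)) := (sumT_cons b l).addRight' _
    _ ∼ add (add a b) (sumT l) := (Step.et7 _ _ _).feq
    _ ∼ add c (sumT l) := h.addLeft' _
    _ ∼ sumT (c :: l) := (sumT_cons c l).symm'

theorem sumT_drop_zero_head (l : List (RingTerm R)) : sumT (zero :: l) ∼ sumT l :=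
  (sumT_cons _ _).trans' (Step.et3 _).feq


/-! ### Standard terms -/

/-- The summand of the standard term of `p` corresponding to exponent `m`. -/
noncomputable def termF (p : MvPolynomial ℕ R) (m : ℕ →₀ ℕ) : RingTerm R :=
  mul (C (MvPolynomial.coeff m p)) (monT m)

/-- The canonical standard term of a polynomial. -/
noncomputable def stdT (p : MvPolynomial ℕ R) : RingTerm R :=
  sumT (p.support.toList.map (termF p))

theorem coe_toList_map {α β : Type*} (s : Finset α) (f : α → β) :
    (↑(s.toList.map f) : Multiset β) = s.val.map f := by
  rw [← Multiset.map_coe, Finset.coe_toList]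

theorem coe_append_singleton {α : Type*} (l : List α) (x : α) :
    (↑(l ++ [x]) : Multiset α) = x ::ₘ ↑l := by
  simp [Multiset.cons_swap]

theorem stdT_zero : (stdT (0 : MvPolynomial ℕ R)) = zero := by
  rw [stdT, MvPolynomial.support_zero, Finset.toList_empty, List.map_nil, sumT_nil]

theorem feq_sumT_stdT_of_ms {q : MvPolynomial ℕ R} (l : List (RingTerm R))
    (h : (↑l : Multiset (RingTerm R)) = q.support.val.map (termF q)) :
    sumT l ∼ stdT q := by
  apply sumT_perm
  rw [← Multiset.coe_eq_coe, h, coe_toList_map]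

theorem isStandard_stdT (p : MvPolynomial ℕ R) : IsStandardWithCarrier (stdT p) p := by
  classical
  refine ⟨p.support.toList.length,
    fun i => MvPolynomial.coeff (p.support.toList.get i) p,
    fun i => p.support.toList.get i,
    fun i => monT (p.support.toList.get i), ?_, ?_, ?_, ?_, ?_⟩
  · intro i
    have : p.support.toList.get i ∈ p.support :=
      Finset.mem_toList.mp (p.support.toList.get_mem _)
    exact MvPolynomial.mem_support_iff.mp this
  · exact List.nodup_iff_injective_get.mp (Finset.nodup_toList p.support)
  · intro i
    exact isMonomial_monT _
  · have hval : (Finset.univ.val : Multiset (Fin p.support.toList.length)) =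
        ↑(List.finRange p.support.toList.length) := by
      rw [Fin.univ_def]
    have hms : Multiset.map
        (fun i => mul (C (MvPolynomial.coeff (p.support.toList.get i) p))
          (monT (p.support.toList.get i))) Finset.univ.val =
        ↑(p.support.toList.map (termF p)) := by
      rw [hval, Multiset.map_coe]
      congr 1
      have : (List.finRange p.support.toList.length).map
          (fun i => termF p (p.support.toList.get i)) = p.support.toList.map (termF p) := by
        rw [show (fun i => termF p (p.support.toList.get i)) =
          (termF p) ∘ (p.support.toList.get) from rfl, ← List.map_map,
          List.map_get_finRange]
      simpa [termF] using this
    rw [IsSumOf, hms]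
    by_cases hnil : p.support.toList.map (termF p) = []
    · left
      rw [hnil, stdT, hnil, sumT_nil]
      exact ⟨rfl, rfl⟩
    · right
      rw [stdT]
      exact isSumOfPos_sumT hnil
  · refine Eq.symm ?_
    simp only [List.get_eq_getElem]
    rw [Fin.sum_univ_fun_getElem p.support.toList
      (fun m => MvPolynomial.monomial m (MvPolynomial.coeff m p)),
      Finset.sum_map_toList]
    exact MvPolynomial.support_sum_monomial_coeff p

/-! ### Adding a monomial to a standard term -/

theorem feq_combine (r c : R) (mu : RingTerm R) :
    add (mul (C r) mu) (mul (C c) mu) ∼ mul (C (r + c)) mu := by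
  calc add (mul (C r) mu) (mul (C c) mu)
      ∼ add (mul mu (C r)) (mul mu (C c)) :=
        ((Step.et6 _ _).feq).addCongr ((Step.et6 _ _).feq)
    _ ∼ mul mu (add (C r) (C c)) := (Step.et9 _ _ _).feq.symm'
    _ ∼ mul mu (C (r + c)) := (Step.et1 r c).feq.mulRight' _
    _ ∼ mul (C (r + c)) mu := (Step.et6 _ _).feq

theorem feq_add_stdT_monomial (p : MvPolynomial ℕ R) (m : ℕ →₀ ℕ) (r : R) :
    add (stdT p) (mul (C r) (monT m)) ∼ stdT (p + MvPolynomial.monomial m r) := by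
  classical
  by_cases hr : r = 0
  · subst hr
    rw [map_zero, add_zero]
    exact (FEq.addRight' _ (feq_mul_C_zero _)).trans' (feq_add_zero _)
  set q := p + MvPolynomial.monomial m r with hq
  have hcoeff : ∀ m', m' ≠ m → MvPolynomial.coeff m' q = MvPolynomial.coeff m' p := by
    intro m' hm'
    rw [hq, MvPolynomial.coeff_add, MvPolynomial.coeff_monomial, if_neg (Ne.symm hm'),
      add_zero]
  have hqm : MvPolynomial.coeff m q = MvPolynomial.coeff m p + r := by
    rw [hq, MvPolynomial.coeff_add, MvPolynomial.coeff_monomial, if_pos rfl]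
  have htermF : ∀ m' ∈ p.support.erase m, termF q m' = termF p m' := by
    intro m' hm'
    rw [termF, termF, hcoeff m' (Finset.ne_of_mem_erase hm')]
  have herase : q.support.erase m = p.support.erase m := by
    ext m'
    rcases eq_or_ne m' m with h | h
    · simp [h]
    · simp only [Finset.mem_erase, MvPolynomial.mem_support_iff, hcoeff m' h, h,
        Ne, not_false_iff, true_and]
  have step1 : add (stdT p) (mul (C r) (monT m)) ∼
      sumT (p.support.toList.map (termF p) ++ [mul (C r) (monT m)]) := by
    have h := sumT_append (p.support.toList.map (termF p)) [mul (C r) (monT m)]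
    rw [sumT_singleton] at h
    exact h
  by_cases hcm : MvPolynomial.coeff m p = 0
  · -- no like term to combine with
    have hmem : m ∉ p.support := by simp [MvPolynomial.mem_support_iff, hcm]
    refine step1.trans' (feq_sumT_stdT_of_ms _ ?_)
    have hqs : q.support = insert m p.support := by
      ext m'
      rcases eq_or_ne m' m with h | h
      · subst h
        simp [MvPolynomial.mem_support_iff, hqm, hcm, hr]
      · simp [MvPolynomial.mem_support_iff, hcoeff m' h, h]
    rw [hqs, Finset.insert_val_of_notMem hmem, Multiset.map_cons, coe_append_singleton]
    congr 1
    · rw [termF, hqm, hcm, zero_add]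
    · rw [coe_toList_map]
      refine Multiset.map_congr rfl ?_
      intro m' hm'
      have : m' ≠ m := fun h => hmem (h ▸ hm')
      rw [termF, termF, hcoeff m' this]
  · -- combine with the existing like term
    have hmem : m ∈ p.support := MvPolynomial.mem_support_iff.mpr hcm
    set rest := (p.support.erase m).toList.map (termF p) with hrest
    have hsupval : p.support.val = m ::ₘ (p.support.erase m).val := by
      rw [Finset.erase_val, Multiset.cons_erase (Finset.mem_def.mp hmem)]
    have hperm : sumT (p.support.toList.map (termF p) ++ [mul (C r) (monT m)]) ∼
        sumT (mul (C r) (monT m) :: termF p m :: rest) := by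
      apply sumT_perm
      rw [← Multiset.coe_eq_coe, coe_append_singleton, coe_toList_map]
      have : ((mul (C r) (monT m) :: termF p m :: rest : List (RingTerm R)) :
          Multiset (RingTerm R)) = mul (C r) (monT m) ::ₘ termF p m ::ₘ ↑rest := by
        simp
      rw [this, hrest, coe_toList_map, hsupval, Multiset.map_cons]
    have hrestq : ∀ hqs : q.support.erase m = p.support.erase m,
        (↑rest : Multiset (RingTerm R)) = (q.support.erase m).val.map (termF q) := by
      intro hqs
      rw [hrest, coe_toList_map, hqs]
      exact (Multiset.map_congr rfl (fun m' hm' => (htermF m' hm').symm))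
    by_cases hz : MvPolynomial.coeff m p + r = 0
    · -- the terms cancel
      have hcomb : add (mul (C r) (monT m)) (termF p m) ∼ zero := by
        refine (feq_combine r _ (monT m)).trans' ?_
        have : r + MvPolynomial.coeff m p = 0 := by rw [add_comm]; exact hz
        rw [this]
        exact feq_mul_C_zero _
      have hqnotmem : m ∉ q.support := by
        simp [MvPolynomial.mem_support_iff, hqm, hz]
      have hqs : q.support = p.support.erase m := by
        rw [← herase, Finset.erase_eq_of_notMem hqnotmem]
      refine step1.trans' (hperm.trans' ((sumT_combine_head rest hcomb).trans'
        ((sumT_drop_zero_head rest).trans' (feq_sumT_stdT_of_ms rest ?_))))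
      rw [hrestq herase]
      rw [herase, ← hqs]
    · -- the terms combine to a nonzero term
      have hcomb : add (mul (C r) (monT m)) (termF p m) ∼ termF q m := by
        refine (feq_combine r _ (monT m)).trans' ?_
        rw [termF, hqm, add_comm r]
        exact feq_rfl
      have hqmem : m ∈ q.support := by
        simp [MvPolynomial.mem_support_iff, hqm, hz]
      refine step1.trans' (hperm.trans' ((sumT_combine_head rest hcomb).trans'
        (feq_sumT_stdT_of_ms _ ?_)))
      have hqval : q.support.val = m ::ₘ (q.support.erase m).val := by
        rw [Finset.erase_val, Multiset.cons_erase (Finset.mem_def.mp hqmem)]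
      have : ((termF q m :: rest : List (RingTerm R)) : Multiset (RingTerm R)) =
          termF q m ::ₘ ↑rest := by simp
      rw [this, hqval, Multiset.map_cons, hrestq herase]

/-! ### From pair lists to standard terms -/

/-- The term corresponding to a coefficient–exponent pair. -/
noncomputable def pairT (x : (ℕ →₀ ℕ) × R) : RingTerm R := mul (C x.2) (monT x.1)

/-- The polynomial corresponding to a list of coefficient–exponent pairs. -/
noncomputable def monoSum (L : List ((ℕ →₀ ℕ) × R)) : MvPolynomial ℕ R :=
  (L.map fun x => MvPolynomial.monomial x.1 x.2).sum

theorem monoSum_nil : monoSum ([] : List ((ℕ →₀ ℕ) × R)) = 0 := rfl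

theorem monoSum_cons (a : (ℕ →₀ ℕ) × R) (L : List ((ℕ →₀ ℕ) × R)) :
    monoSum (a :: L) = MvPolynomial.monomial a.1 a.2 + monoSum L := by
  rw [monoSum, List.map_cons, List.sum_cons, monoSum]

theorem monoSum_append (L L' : List ((ℕ →₀ ℕ) × R)) :
    monoSum (L ++ L') = monoSum L + monoSum L' := by
  rw [monoSum, List.map_append, List.sum_append, monoSum, monoSum]

theorem feq_sumT_pairs_stdT (L : List ((ℕ →₀ ℕ) × R)) :
    sumT (L.map pairT) ∼ stdT (monoSum L) := by
  induction L with
  | nil =>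
    rw [List.map_nil, sumT_nil, monoSum_nil, stdT_zero]
    exact feq_rfl
  | cons a L ih =>
    rw [List.map_cons]
    calc sumT (pairT a :: L.map pairT)
        ∼ add (pairT a) (sumT (L.map pairT)) := sumT_cons _ _
      _ ∼ add (pairT a) (stdT (monoSum L)) := ih.addRight' _
      _ ∼ add (stdT (monoSum L)) (pairT a) := (Step.et5 _ _).feq
      _ ∼ stdT (monoSum L + MvPolynomial.monomial a.1 a.2) :=
          feq_add_stdT_monomial (monoSum L) a.1 a.2
      _ ∼ stdT (monoSum (a :: L)) := by rw [monoSum_cons, add_comm]; exact feq_rfl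

/-! ### Distribution -/

theorem feq_mul_sumT_right (t : RingTerm R) (B : List (RingTerm R)) :
    mul t (sumT B) ∼ sumT (B.map (mul t)) := by
  induction B with
  | nil =>
    rw [List.map_nil, sumT_nil]
    exact (Step.et6 _ _).feq.trans' (Step.et10 _).feq
  | cons b B ih =>
    rw [List.map_cons]
    calc mul t (sumT (b :: B))
        ∼ mul t (add b (sumT B)) := (sumT_cons b B).mulRight' t
      _ ∼ add (mul t b) (mul t (sumT B)) := (Step.et9 _ _ _).feq
      _ ∼ add (mul t b) (sumT (B.map (mul t))) := ih.addRight' _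
      _ ∼ sumT (mul t b :: B.map (mul t)) := (sumT_cons _ _).symm'

theorem feq_mul_sumT (A B : List (RingTerm R)) :
    mul (sumT A) (sumT B) ∼ sumT (A.flatMap fun a => B.map (mul a)) := by
  induction A with
  | nil =>
    rw [sumT_nil, List.flatMap_nil, sumT_nil]
    exact (Step.et10 _).feq
  | cons a A ih =>
    rw [List.flatMap_cons]
    calc mul (sumT (a :: A)) (sumT B)
        ∼ mul (add a (sumT A)) (sumT B) := (sumT_cons a A).mulLeft' _
      _ ∼ mul (sumT B) (add a (sumT A)) := (Step.et6 _ _).feq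
      _ ∼ add (mul (sumT B) a) (mul (sumT B) (sumT A)) := (Step.et9 _ _ _).feq
      _ ∼ add (mul a (sumT B)) (mul (sumT A) (sumT B)) :=
          ((Step.et6 _ _).feq).addCongr ((Step.et6 _ _).feq)
      _ ∼ add (sumT (B.map (mul a))) (sumT (A.flatMap fun a => B.map (mul a))) :=
          (feq_mul_sumT_right a B).addCongr ih
      _ ∼ sumT (B.map (mul a) ++ A.flatMap fun a => B.map (mul a)) := sumT_append _ _

theorem feq_pairT_mul (x y : (ℕ →₀ ℕ) × R) :
    mul (pairT x) (pairT y) ∼ pairT (x.1 + y.1, x.2 * y.2) := by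
  obtain ⟨m, r⟩ := x
  obtain ⟨m', s⟩ := y
  show mul (mul (C r) (monT m)) (mul (C s) (monT m')) ∼ mul (C (r * s)) (monT (m + m'))
  calc mul (mul (C r) (monT m)) (mul (C s) (monT m'))
      ∼ mul (C r) (mul (monT m) (mul (C s) (monT m'))) := (Step.et8 _ _ _).feq.symm'
    _ ∼ mul (C r) (mul (mul (monT m) (C s)) (monT m')) :=
        ((Step.et8 _ _ _).feq).mulRight' _
    _ ∼ mul (C r) (mul (mul (C s) (monT m)) (monT m')) :=
        (((Step.et6 _ _).feq).mulLeft' _).mulRight' _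
    _ ∼ mul (C r) (mul (C s) (mul (monT m) (monT m'))) :=
        ((Step.et8 _ _ _).feq.symm').mulRight' _
    _ ∼ mul (mul (C r) (C s)) (mul (monT m) (monT m')) := (Step.et8 _ _ _).feq
    _ ∼ mul (C (r * s)) (mul (monT m) (monT m')) := ((Step.et2 r s).feq).mulLeft' _
    _ ∼ mul (C (r * s)) (monT (m + m')) := (feq_mul_monT m m').mulRight' _

/-! ### The main induction -/

theorem exists_pairs (t : RingTerm R) :
    ∃ L : List ((ℕ →₀ ℕ) × R), monoSum L = psi t ∧ t ∼ sumT (L.map pairT) := by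
  induction t with
  | X i =>
    refine ⟨[(Finsupp.single i 1, 1)], ?_, ?_⟩
    · rw [monoSum, List.map_cons, List.map_nil, List.sum_cons, List.sum_nil, add_zero]
      rfl
    · rw [List.map_cons, List.map_nil, sumT_singleton]
      have hm : (monT (Finsupp.single i 1) : RingTerm R) ∼ X i := by
        rw [monT]
        refine (prodT_perm (l' := [i]) ?_).trans' ?_
        · rw [← Multiset.coe_eq_coe, Multiset.coe_toList, Finsupp.toMultiset_single]
          simp
        · rw [prodT_singleton]
          exact feq_rfl
      calc (X i : RingTerm R) ∼ mul one (X i) := (Step.et4 _).feq.symm'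
        _ ∼ mul (C 1) (X i) := (Step.et0).feq.mulLeft' _
        _ ∼ mul (C 1) (monT (Finsupp.single i 1)) := (hm.symm').mulRight' _
      -- `pairT` unfolds definitionally
  | C r =>
    refine ⟨[(0, r)], ?_, ?_⟩
    · rw [monoSum, List.map_cons, List.map_nil, List.sum_cons, List.sum_nil, add_zero]
      show (MvPolynomial.monomial 0) r = _
      rw [MvPolynomial.monomial_zero']
      rfl
    · rw [List.map_cons, List.map_nil, sumT_singleton]
      show C r ∼ mul (C r) (monT 0)
      rw [monT_zero]
      exact (feq_mul_one (C r)).symm'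
  | zero =>
    refine ⟨[], rfl, ?_⟩
    rw [List.map_nil, sumT_nil]
    exact feq_rfl
  | one =>
    refine ⟨[(0, 1)], ?_, ?_⟩
    · rw [monoSum, List.map_cons, List.map_nil, List.sum_cons, List.sum_nil, add_zero]
      show (MvPolynomial.monomial 0) 1 = _
      rw [MvPolynomial.monomial_zero']
      rfl
    · rw [List.map_cons, List.map_nil, sumT_singleton]
      show one ∼ mul (C 1) (monT 0)
      rw [monT_zero]
      exact (Step.et0).feq.trans' (feq_mul_one (C 1)).symm'
  | add t u iht ihu =>
    obtain ⟨L1, h1, f1⟩ := iht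
    obtain ⟨L2, h2, f2⟩ := ihu
    refine ⟨L1 ++ L2, ?_, ?_⟩
    · rw [monoSum_append, h1, h2]
      rfl
    · rw [List.map_append]
      exact (f1.addCongr f2).trans' (sumT_append _ _)
  | mul t u iht ihu =>
    obtain ⟨L1, h1, f1⟩ := iht
    obtain ⟨L2, h2, f2⟩ := ihu
    set LP := L1.flatMap (fun x => L2.map fun y => (x, y)) with hLP
    refine ⟨LP.map (fun z => (z.1.1 + z.2.1, z.1.2 * z.2.2)), ?_, ?_⟩
    · simp only [psi]
      rw [← h1, ← h2]
      show monoSum _ = monoSum L1 * monoSum L2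
      rw [hLP]
      clear hLP h1 h2 f1 f2
      induction L1 with
      | nil => simp [monoSum]
      | cons a L1 ihL =>
        rw [List.flatMap_cons, List.map_append, monoSum_append, ihL, monoSum_cons,
          add_mul]
        congr 1
        rw [List.map_map, monoSum, List.map_map]
        have : ((fun x : (ℕ →₀ ℕ) × R => MvPolynomial.monomial x.1 x.2) ∘
            (fun z : ((ℕ →₀ ℕ) × R) × ((ℕ →₀ ℕ) × R) => (z.1.1 + z.2.1, z.1.2 * z.2.2)) ∘
            (fun y : (ℕ →₀ ℕ) × R => (a, y))) =
            fun y : (ℕ →₀ ℕ) × R =>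
              MvPolynomial.monomial a.1 a.2 * MvPolynomial.monomial y.1 y.2 := by
          funext y
          simp [Function.comp, MvPolynomial.monomial_mul]
        rw [this, List.sum_map_mul_left, monoSum]
    · have hstep : mul t u ∼ sumT ((L1.map pairT).flatMap fun a =>
          (L2.map pairT).map (mul a)) :=
        (f1.mulCongr f2).trans' (feq_mul_sumT _ _)
      refine hstep.trans' ?_
      have heq : ((L1.map pairT).flatMap fun a => (L2.map pairT).map (mul a)) =
          LP.map (fun z => mul (pairT z.1) (pairT z.2)) := by
        rw [hLP, List.map_flatMap, List.flatMap_map]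
        congr 1
        funext x
        rw [List.map_map, List.map_map]
        rfl
      rw [heq, List.map_map]
      refine (sumT_congr LP fun z _ => feq_pairT_mul z.1 z.2).trans' ?_
      exact feq_rfl

theorem exists_standard_feq_aux (t : RingTerm R) :
    ∃ (u : RingTerm R) (p : MvPolynomial ℕ R), IsStandardWithCarrier u p ∧ FEq t u := by
  obtain ⟨L, _, hfeq⟩ := exists_pairs t
  exact ⟨stdT (monoSum L), monoSum L, isStandard_stdT _,
    hfeq.trans' (feq_sumT_pairs_stdT L)⟩

end RingTerm

open RingTerm in
/-- every ring term is f-equivalent to a standard ring term. -/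
theorem exists_standard_feq {R : Type*} [CommRing R] (t : RingTerm R) :
    ∃ (u : RingTerm R) (p : MvPolynomial ℕ R),
      IsStandardWithCarrier u p ∧ FEq t u := by
  exact RingTerm.exists_standard_feq_aux t
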